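/- Let Γ be a finite undirected simple graph that is the disjoint union of graphs Γ^(1),…,Γ^(k), with vertices x_j^(i) for j = 1,…,n^(i). Let x = ∏_{i,j} (x_j^(i))^{z_j^(i)} · ∏_{l=1}^N y_l^{t_l} ∈ G_Γ and suppose there are components i_1 ≠ i_2 and indices j_1, j_2 with z_{j_1}^{(i_1)} ≠ 0 and z_{j_2}^{(i_2)} ≠ 0. Then, with d := gcd of all the z_j^(i), the centralizer of x in G_Γ equals the internal direct product ⟨ ∏_{i,j} (x_j^(i))^{z_j^(i)/d} ⟩ × γ_2(G_Γ), and this centralizer is free abelian of rank N+1. -/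

import Mathlib

/-- Non-adjacent pairs `(i,j)` with `i < j`. -/
abbrev NonEdge {V : Type} [LinearOrder V] (Γ : SimpleGraph V) : Type :=
  {p : V × V // p.1 < p.2 ∧ ¬ Γ.Adj p.1 p.2}

abbrev GraphGens {V : Type} [LinearOrder V] (Γ : SimpleGraph V) : Type := V ⊕ NonEdge Γ

open scoped commutatorElement

/-- The relations of the 2-step nilpotent group associated to a graph. -/
def GraphRels {V : Type} [LinearOrder V] (Γ : SimpleGraph V) : Set (FreeGroup (GraphGens Γ)) :=
  {r | (∃ i j : V, Γ.Adj i j ∧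
      r = ⁅(FreeGroup.of (Sum.inl j) : FreeGroup (GraphGens Γ)), FreeGroup.of (Sum.inl i)⁆) ∨
    (∃ p : NonEdge Γ,
      r = ⁅(FreeGroup.of (Sum.inl p.1.2) : FreeGroup (GraphGens Γ)), FreeGroup.of (Sum.inl p.1.1)⁆ *
        (FreeGroup.of (Sum.inr p))⁻¹) ∨
    (∃ (l : V) (p : NonEdge Γ),
      r = ⁅(FreeGroup.of (Sum.inl l) : FreeGroup (GraphGens Γ)), FreeGroup.of (Sum.inr p)⁆)}

/-- The 2-step nilpotent group associated to a graph. -/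
abbrev GraphGroup {V : Type} [LinearOrder V] (Γ : SimpleGraph V) : Type :=
  PresentedGroup (GraphRels Γ)

/-- The generator of `GraphGroup Γ` corresponding to the vertex `i`. -/
def xg {V : Type} [LinearOrder V] (Γ : SimpleGraph V) (i : V) : GraphGroup Γ :=
  PresentedGroup.of (Sum.inl i)

/-- The central generator of `GraphGroup Γ` corresponding to a non-adjacent pair. -/
def yg {V : Type} [LinearOrder V] (Γ : SimpleGraph V) (p : NonEdge Γ) : GraphGroup Γ :=
  PresentedGroup.of (Sum.inr p)

/-- Twisted conjugacy: `a = c * b * (φ c)⁻¹` for some `c`. -/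
def TwistedConj {G : Type*} [Group G] (φ : G →* G) (a b : G) : Prop :=
  ∃ c : G, a = c * b * (φ c)⁻¹

/-- The Reidemeister number of an endomorphism: the number of twisted conjugacy
classes, as an element of `ℕ∞`. -/
noncomputable def reidemeisterNumber {G : Type*} [Group G] (φ : G →* G) : ℕ∞ :=
  ENat.card (Quot (TwistedConj φ))

/-- The Reidemeister spectrum of a group. -/
noncomputable def reidemeisterSpectrum (G : Type*) [Group G] : Set ℕ∞ :=
  {r : ℕ∞ | ∃ φ : G ≃* G, r = reidemeisterNumber φ.toMonoidHom}

/-- `|x|_∞ : ℤ → ℕ∞`. -/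
def natAbsInfty (x : ℤ) : ℕ∞ := if x = 0 then ⊤ else (x.natAbs : ℕ∞)

/-- A graph is a (simplicial) join if its vertex set can be partitioned in two
nonempty parts such that all pairs of vertices in different parts are adjacent. -/
def IsJoinGraph {V : Type*} (Γ : SimpleGraph V) : Prop :=
  ∃ A B : Set V, A.Nonempty ∧ B.Nonempty ∧ Disjoint A B ∧ A ∪ B = Set.univ ∧
    ∀ a ∈ A, ∀ b ∈ B, Γ.Adj a b



section Model
variable {n : ℕ}

/-- A concrete model of the graph group: a central extension of `Fin n → ℤ`
by `NonEdge Γ → ℤ` via a bilinear 2-cocycle. -/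
@[ext] structure Mdl (Γ : SimpleGraph (Fin n)) : Type where
  a : Fin n → ℤ
  b : NonEdge Γ → ℤ

namespace Mdl
variable {Γ : SimpleGraph (Fin n)}

instance : Mul (Mdl Γ) :=
  ⟨fun u v => ⟨u.a + v.a, u.b + v.b + fun p => u.a p.1.2 * v.a p.1.1⟩⟩
instance : One (Mdl Γ) := ⟨⟨0, 0⟩⟩
instance : Inv (Mdl Γ) :=
  ⟨fun u => ⟨-u.a, -u.b + fun p => u.a p.1.2 * u.a p.1.1⟩⟩

@[simp] lemma mul_a (u v : Mdl Γ) : (u * v).a = u.a + v.a := rfl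
@[simp] lemma mul_b (u v : Mdl Γ) :
    (u * v).b = u.b + v.b + fun p => u.a p.1.2 * v.a p.1.1 := rfl
@[simp] lemma one_a : (1 : Mdl Γ).a = 0 := rfl
@[simp] lemma one_b : (1 : Mdl Γ).b = 0 := rfl
@[simp] lemma inv_a (u : Mdl Γ) : (u⁻¹).a = -u.a := rfl
@[simp] lemma inv_b (u : Mdl Γ) :
    (u⁻¹).b = -u.b + fun p => u.a p.1.2 * u.a p.1.1 := rfl

instance : Group (Mdl Γ) where
  mul_assoc u v w := by
    refine Mdl.ext (funext fun i => ?_) (funext fun p => ?_) <;> simp <;> ring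
  one_mul u := by
    refine Mdl.ext (funext fun i => ?_) (funext fun p => ?_) <;> simp
  mul_one u := by
    refine Mdl.ext (funext fun i => ?_) (funext fun p => ?_) <;> simp
  inv_mul_cancel u := by
    refine Mdl.ext (funext fun i => ?_) (funext fun p => ?_) <;> simp <;> ring

lemma commutator_eq (u v : Mdl Γ) :
    ⁅u, v⁆ = ⟨0, fun p => u.a p.1.2 * v.a p.1.1 - v.a p.1.2 * u.a p.1.1⟩ := by
  rw [commutatorElement_def]
  refine Mdl.ext (funext fun i => ?_) (funext fun p => ?_) <;> simp <;> ring

/-- First component, as a homomorphism into the additive group of functions. -/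
def fstHom : Mdl Γ →* Multiplicative (Fin n → ℤ) where
  toFun u := Multiplicative.ofAdd u.a
  map_one' := rfl
  map_mul' u v := rfl

@[simp] lemma fstHom_apply (u : Mdl Γ) : (fstHom u).toAdd = u.a := rfl

@[simp] lemma zpow_a (u : Mdl Γ) (m : ℤ) : (u ^ m).a = m • u.a := by
  have h2 := congrArg Multiplicative.toAdd (map_zpow (fstHom (Γ := Γ)) u m)
  rw [toAdd_zpow] at h2
  exact h2

end Mdl
end Model

section SwapLemma
variable {G : Type*} [Group G]

lemma conj_zpow_eq {x y cc : G} (h : x⁻¹ * y * x = y * cc) (hx : Commute cc x) :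
    ∀ m : ℤ, x ^ (-m) * y * x ^ m = y * cc ^ m := by
  have hxy : x * y * x⁻¹ = y * cc⁻¹ := by
    have h5 : x * (x⁻¹ * y * x) * x⁻¹ = x * (y * cc) * x⁻¹ := by rw [h]
    have h6 : x * (x⁻¹ * y * x) * x⁻¹ = y := by group
    have h7 : x * (y * cc) * x⁻¹ = x * y * (cc * x⁻¹) := by group
    rw [h6, h7, hx.inv_right.eq] at h5
    have : y * cc⁻¹ = (x * y * (x⁻¹ * cc)) * cc⁻¹ := by rw [← h5]
    rw [this]; group
  intro m
  induction m using Int.induction_on with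
  | zero => simp
  | succ m ih =>
      have e1 : x ^ (-((m : ℤ) + 1)) * y * x ^ ((m : ℤ) + 1) =
          x⁻¹ * (x ^ (-(m : ℤ)) * y * x ^ (m : ℤ)) * x := by group
      rw [e1, ih]
      have e2 : x⁻¹ * (y * cc ^ (m : ℤ)) * x = (x⁻¹ * y * x) * (x⁻¹ * cc ^ (m : ℤ) * x) := by
        group
      have e3 : x⁻¹ * cc ^ (m : ℤ) * x = cc ^ (m : ℤ) := by
        rw [mul_assoc, (hx.zpow_left m).eq, ← mul_assoc, inv_mul_cancel, one_mul]
      rw [e2, e3, h]; group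
  | pred m ih =>
      have e1 : x ^ (-(-(m : ℤ) - 1)) * y * x ^ (-(m : ℤ) - 1) =
          x * (x ^ (-(-(m : ℤ))) * y * x ^ (-(m : ℤ))) * x⁻¹ := by group
      rw [e1, ih]
      have e2 : x * (y * cc ^ (-(m : ℤ))) * x⁻¹ =
          (x * y * x⁻¹) * (x * cc ^ (-(m : ℤ)) * x⁻¹) := by group
      have e3 : x * cc ^ (-(m : ℤ)) * x⁻¹ = cc ^ (-(m : ℤ)) := by
        rw [mul_assoc, ((hx.zpow_left _).inv_right).eq, ← mul_assoc, mul_inv_cancel, one_mul]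
      rw [e2, e3, hxy]; group

lemma swap_zpow {x y cc : G} (h : y * x = x * y * cc)
    (hx : Commute cc x) (hy : Commute cc y) (m k : ℤ) :
    y ^ k * x ^ m = x ^ m * y ^ k * cc ^ (m * k) := by
  have hconj : x⁻¹ * y * x = y * cc := by
    have : x⁻¹ * (y * x) = x⁻¹ * (x * y * cc) := by rw [h]
    calc x⁻¹ * y * x = x⁻¹ * (y * x) := by group
    _ = x⁻¹ * (x * y * cc) := this
    _ = y * cc := by group
  have A := conj_zpow_eq hconj hx m
  have B : x ^ (-m) * y ^ k * x ^ m = (y * cc ^ m) ^ k := by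
    have e : ∀ u : G, x ^ (-m) * u * x ^ m = (MulAut.conj (x ^ (-m))) u := by
      intro u; rw [MulAut.conj_apply]; group
    rw [e, map_zpow, ← e, A]
  have C : (y * cc ^ m) ^ k = y ^ k * cc ^ (m * k) := by
    rw [(hy.zpow_left m).symm.mul_zpow, ← zpow_mul]
  calc y ^ k * x ^ m = x ^ m * (x ^ (-m) * y ^ k * x ^ m) := by group
  _ = x ^ m * (y ^ k * cc ^ (m * k)) := by rw [B, C]
  _ = x ^ m * y ^ k * cc ^ (m * k) := by group

end SwapLemma

section GraphLemmas
variable {V : Type} [LinearOrder V] {Γ : SimpleGraph V}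

lemma graphRel_one {r : FreeGroup (GraphGens Γ)} (hr : r ∈ GraphRels Γ) :
    PresentedGroup.mk (GraphRels Γ) r = 1 :=
  (QuotientGroup.eq_one_iff r).2 (Subgroup.subset_normalClosure hr)

lemma adj_commute {i j : V} (h : Γ.Adj i j) : Commute (xg Γ j) (xg Γ i) := by
  have h1 : PresentedGroup.mk (GraphRels Γ)
      ⁅(FreeGroup.of (Sum.inl j) : FreeGroup (GraphGens Γ)), FreeGroup.of (Sum.inl i)⁆ = 1 :=
    graphRel_one (Or.inl ⟨i, j, h, rfl⟩)
  rw [map_commutatorElement] at h1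
  exact commutatorElement_eq_one_iff_commute.mp h1

lemma nonedge_comm (p : NonEdge Γ) : ⁅xg Γ p.1.2, xg Γ p.1.1⁆ = yg Γ p := by
  have h1 : PresentedGroup.mk (GraphRels Γ)
      (⁅(FreeGroup.of (Sum.inl p.1.2) : FreeGroup (GraphGens Γ)), FreeGroup.of (Sum.inl p.1.1)⁆ *
        (FreeGroup.of (Sum.inr p))⁻¹) = 1 :=
    graphRel_one (Or.inr (Or.inl ⟨p, rfl⟩))
  rw [map_mul, map_inv, map_commutatorElement, mul_inv_eq_one] at h1
  exact h1

lemma xg_yg_commute (l : V) (p : NonEdge Γ) : Commute (xg Γ l) (yg Γ p) := by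
  have h1 : PresentedGroup.mk (GraphRels Γ)
      ⁅(FreeGroup.of (Sum.inl l) : FreeGroup (GraphGens Γ)), FreeGroup.of (Sum.inr p)⁆ = 1 :=
    graphRel_one (Or.inr (Or.inr ⟨l, p, rfl⟩))
  rw [map_commutatorElement] at h1
  exact commutatorElement_eq_one_iff_commute.mp h1

lemma yg_commute (p : NonEdge Γ) (u : GraphGroup Γ) : Commute (yg Γ p) u := by
  have hgen : ∀ s ∈ Set.range (PresentedGroup.of :
      GraphGens Γ → GraphGroup Γ), Commute (yg Γ p) s := by
    rintro s ⟨a, rfl⟩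
    cases a with
    | inl l => exact (xg_yg_commute l p).symm
    | inr q =>
        have hq : ⁅xg Γ q.1.2, xg Γ q.1.1⁆ = yg Γ q := nonedge_comm q
        have h2 : Commute (yg Γ p) (xg Γ q.1.2) := (xg_yg_commute _ p).symm
        have h1 : Commute (yg Γ p) (xg Γ q.1.1) := (xg_yg_commute _ p).symm
        have : Commute (yg Γ p) ⁅xg Γ q.1.2, xg Γ q.1.1⁆ :=
          (h2.mul_right (h1.mul_right (h2.inv_right.mul_right h1.inv_right)))
        rw [hq] at this
        exact this
  have hu : u ∈ Subgroup.closure (Set.range (PresentedGroup.of :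
      GraphGens Γ → GraphGroup Γ)) := by
    rw [PresentedGroup.closure_range_of]; trivial
  induction hu using Subgroup.closure_induction with
  | mem s hs => exact hgen s hs
  | one => exact Commute.one_right _
  | mul a b _ _ ha hb => exact ha.mul_right hb
  | inv a _ ha => exact ha.inv_right

lemma yg_mem_center (p : NonEdge Γ) : yg Γ p ∈ Subgroup.center (GraphGroup Γ) :=
  Subgroup.mem_center_iff.mpr fun u => ((yg_commute p u).symm).eq

/-- The subgroup generated by the `y`s. -/
def Cg (Γ : SimpleGraph V) : Subgroup (GraphGroup Γ) :=
  Subgroup.closure (Set.range (yg Γ))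

lemma Cg_le_center : Cg Γ ≤ Subgroup.center (GraphGroup Γ) := by
  rw [Cg, Subgroup.closure_le]
  rintro s ⟨p, rfl⟩
  exact yg_mem_center p

lemma Cg_mem_commute {u : GraphGroup Γ} (hu : u ∈ Cg Γ) (v : GraphGroup Γ) : Commute u v :=
  (Subgroup.mem_center_iff.mp (Cg_le_center hu) v).symm

end GraphLemmas
section GraphFin
variable {n : ℕ} {Γ : SimpleGraph (Fin n)}

noncomputable instance : Fintype (NonEdge Γ) := Fintype.ofFinite _

/-- The canonical homomorphism from the graph group to the model. -/
noncomputable def phiG (Γ : SimpleGraph (Fin n)) : GraphGroup Γ →* Mdl Γ := by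
  refine PresentedGroup.toGroup (f := fun s => match s with
    | Sum.inl i => ⟨Pi.single i 1, 0⟩
    | Sum.inr p => ⟨0, Pi.single p 1⟩) ?_
  rintro r (⟨i, j, hadj, rfl⟩ | ⟨p, rfl⟩ | ⟨l, p, rfl⟩)
  · rw [map_commutatorElement, FreeGroup.lift_apply_of, FreeGroup.lift_apply_of, Mdl.commutator_eq]
    refine Mdl.ext rfl (funext fun q => ?_)
    simp only [Mdl.one_b, Pi.zero_apply]
    by_cases h1 : q.1.2 = j ∧ q.1.1 = i
    · exact absurd (h1.1 ▸ h1.2 ▸ q.2.2) (fun hn => hn hadj)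
    · by_cases h2 : q.1.2 = i ∧ q.1.1 = j
      · exact absurd (h2.1 ▸ h2.2 ▸ q.2.2) (fun hn => hn hadj.symm)
      · rcases not_and_or.mp h1 with h | h <;> rcases not_and_or.mp h2 with h' | h' <;>
          simp [Pi.single_apply, h, h'] <;> tauto
  · rw [map_mul, map_inv, map_commutatorElement, FreeGroup.lift_apply_of, FreeGroup.lift_apply_of,
      FreeGroup.lift_apply_of, Mdl.commutator_eq, mul_inv_eq_one]
    refine Mdl.ext rfl (funext fun q => ?_)
    by_cases hq : q = p
    · subst hq
      have hne : ¬(q.1.2 = q.1.1) := fun h => absurd (h ▸ q.2.1) (lt_irrefl _)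
      simp [Pi.single_apply, hne]
    · have h1 : ¬(q.1.2 = p.1.2 ∧ q.1.1 = p.1.1) := by
        intro ⟨h2, h3⟩; exact hq (Subtype.ext (Prod.ext h3 h2))
      have h2 : ¬(q.1.2 = p.1.1 ∧ q.1.1 = p.1.2) := by
        intro ⟨h3, h4⟩
        have := q.2.1
        rw [h3, h4] at this
        exact absurd (this.trans p.2.1) (lt_irrefl _)
      rcases not_and_or.mp h1 with h | h <;> rcases not_and_or.mp h2 with h' | h' <;>
        simp [Pi.single_apply, h, h', hq] <;> tauto
  · rw [map_commutatorElement, FreeGroup.lift_apply_of, FreeGroup.lift_apply_of, Mdl.commutator_eq]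
    exact Mdl.ext rfl (funext fun q => by simp)

@[simp] lemma phiG_xg (v : Fin n) : phiG Γ (xg Γ v) = ⟨Pi.single v 1, 0⟩ :=
  PresentedGroup.toGroup.of _

@[simp] lemma phiG_yg (p : NonEdge Γ) : phiG Γ (yg Γ p) = ⟨0, Pi.single p 1⟩ :=
  PresentedGroup.toGroup.of _

end GraphFin
section Products
variable {n : ℕ} {Γ : SimpleGraph (Fin n)}

lemma central_comm {cg : GraphGroup Γ} (hc : cg ∈ Cg Γ) (u : GraphGroup Γ) :
    cg * u = u * cg := (Cg_mem_commute hc u).eq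

/-- Weak commutation of generators: commutators of `x`-generators are central. -/
lemma weak_comm (u v : Fin n) :
    ∃ cc ∈ Cg Γ, xg Γ u * xg Γ v = xg Γ v * xg Γ u * cc := by
  rcases lt_trichotomy u v with h | h | h
  · -- u < v
    by_cases hadj : Γ.Adj u v
    · exact ⟨1, one_mem _, by rw [mul_one, (adj_commute hadj).eq]⟩
    · refine ⟨(yg Γ ⟨(u, v), h, hadj⟩)⁻¹, inv_mem (Subgroup.subset_closure ⟨_, rfl⟩), ?_⟩
      have hc := nonedge_comm (Γ := Γ) ⟨(u, v), h, hadj⟩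
      rw [commutatorElement_def] at hc
      -- hc : xg v * xg u * (xg v)⁻¹ * (xg u)⁻¹ = yg p  (as p.1.1 = u, p.1.2 = v)
      have h2 : xg Γ v * xg Γ u = yg Γ ⟨(u, v), h, hadj⟩ * (xg Γ u * xg Γ v) := by
        calc xg Γ v * xg Γ u
            = (xg Γ v * xg Γ u * (xg Γ v)⁻¹ * (xg Γ u)⁻¹) * (xg Γ u * xg Γ v) := by group
        _ = yg Γ ⟨(u, v), h, hadj⟩ * (xg Γ u * xg Γ v) := by rw [hc]
      rw [h2, central_comm (Subgroup.subset_closure ⟨_, rfl⟩) (xg Γ u * xg Γ v)]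
      group
  · exact ⟨1, one_mem _, by rw [h, mul_one]⟩
  · -- v < u
    by_cases hadj : Γ.Adj v u
    · exact ⟨1, one_mem _, by rw [mul_one, (adj_commute hadj).symm.eq]⟩
    · refine ⟨yg Γ ⟨(v, u), h, hadj⟩, Subgroup.subset_closure ⟨_, rfl⟩, ?_⟩
      have hc := nonedge_comm (Γ := Γ) ⟨(v, u), h, hadj⟩
      rw [commutatorElement_def] at hc
      calc xg Γ u * xg Γ v
          = (xg Γ u * xg Γ v * (xg Γ u)⁻¹ * (xg Γ v)⁻¹) * (xg Γ v * xg Γ u) := by group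
      _ = xg Γ v * xg Γ u * yg Γ ⟨(v, u), h, hadj⟩ := by
          rw [hc, central_comm (Subgroup.subset_closure ⟨_, rfl⟩) (xg Γ v * xg Γ u)]

lemma weak_swap_zpow (u v : Fin n) (k m : ℤ) :
    ∃ cc ∈ Cg Γ, xg Γ u ^ k * xg Γ v ^ m = xg Γ v ^ m * xg Γ u ^ k * cc := by
  obtain ⟨cc, hcc, h⟩ := weak_comm (Γ := Γ) u v
  refine ⟨cc ^ (m * k), zpow_mem hcc _, ?_⟩
  exact swap_zpow h (Cg_mem_commute hcc _) (Cg_mem_commute hcc _) m k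

/-- Product of powers of the `x` generators along a list of vertices. -/
noncomputable def Pl (L : List (Fin n)) (a : Fin n → ℤ) : GraphGroup Γ :=
  (L.map fun v => xg Γ v ^ a v).prod

@[simp] lemma Pl_nil (a : Fin n → ℤ) : Pl (Γ := Γ) [] a = 1 := rfl

lemma Pl_cons (v : Fin n) (L : List (Fin n)) (a : Fin n → ℤ) :
    Pl (Γ := Γ) (v :: L) a = xg Γ v ^ a v * Pl L a := by
  simp [Pl]

lemma Pl_move (L : List (Fin n)) (a : Fin n → ℤ) (v : Fin n) (k : ℤ) :
    ∃ t ∈ Cg Γ, Pl (Γ := Γ) L a * xg Γ v ^ k = xg Γ v ^ k * Pl L a * t := by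
  induction L with
  | nil => exact ⟨1, one_mem _, by simp⟩
  | cons u L ih =>
      obtain ⟨t1, ht1, h1⟩ := ih
      obtain ⟨cc, hcc, h2⟩ := weak_swap_zpow (Γ := Γ) u v (a u) k
      refine ⟨cc * t1, mul_mem hcc ht1, ?_⟩
      calc Pl (Γ := Γ) (u :: L) a * xg Γ v ^ k
          = xg Γ u ^ a u * (Pl L a * xg Γ v ^ k) := by rw [Pl_cons]; group
      _ = xg Γ u ^ a u * (xg Γ v ^ k * Pl L a * t1) := by rw [h1]
      _ = (xg Γ u ^ a u * xg Γ v ^ k) * Pl L a * t1 := by group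
      _ = (xg Γ v ^ k * xg Γ u ^ a u * cc) * Pl L a * t1 := by rw [h2]
      _ = xg Γ v ^ k * xg Γ u ^ a u * (cc * Pl L a) * t1 := by group
      _ = xg Γ v ^ k * xg Γ u ^ a u * (Pl L a * cc) * t1 := by rw [central_comm hcc]
      _ = xg Γ v ^ k * Pl (u :: L) a * (cc * t1) := by rw [Pl_cons]; group

lemma Pl_mul (L : List (Fin n)) (a b : Fin n → ℤ) :
    ∃ t ∈ Cg Γ, Pl (Γ := Γ) L a * Pl L b = Pl L (a + b) * t := by
  induction L with
  | nil => exact ⟨1, one_mem _, by simp⟩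
  | cons v L ih =>
      obtain ⟨t1, ht1, h1⟩ := ih
      obtain ⟨t2, ht2, h2⟩ := Pl_move (Γ := Γ) L a v (b v)
      refine ⟨t2 * t1, mul_mem ht2 ht1, ?_⟩
      have hab : (a + b) v = a v + b v := rfl
      calc Pl (Γ := Γ) (v :: L) a * Pl (v :: L) b
          = xg Γ v ^ a v * (Pl L a * xg Γ v ^ b v) * Pl L b := by rw [Pl_cons, Pl_cons]; group
      _ = xg Γ v ^ a v * (xg Γ v ^ b v * Pl L a * t2) * Pl L b := by rw [h2]
      _ = xg Γ v ^ a v * xg Γ v ^ b v * Pl L a * (t2 * Pl L b) := by group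
      _ = xg Γ v ^ a v * xg Γ v ^ b v * Pl L a * (Pl L b * t2) := by rw [central_comm ht2]
      _ = xg Γ v ^ (a v + b v) * (Pl L a * Pl L b) * t2 := by rw [zpow_add]; group
      _ = xg Γ v ^ (a v + b v) * (Pl L (a + b) * t1) * t2 := by rw [h1]
      _ = Pl (v :: L) (a + b) * (t1 * t2) := by rw [Pl_cons, hab]; group
      _ = Pl (v :: L) (a + b) * (t2 * t1) := by rw [central_comm ht1 t2]

lemma Pl_zero (L : List (Fin n)) : Pl (Γ := Γ) L 0 = 1 := by
  induction L with
  | nil => rfl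
  | cons v L ih => rw [Pl_cons, ih]; simp

lemma Pl_single (L : List (Fin n)) (hnd : L.Nodup) (v : Fin n) (m : ℤ) :
    Pl (Γ := Γ) L (Pi.single v m) = if v ∈ L then xg Γ v ^ m else 1 := by
  induction L with
  | nil => simp
  | cons u L ih =>
      rw [Pl_cons, ih (List.nodup_cons.mp hnd).2]
      by_cases huv : u = v
      · subst huv
        have : u ∉ L := (List.nodup_cons.mp hnd).1
        simp [this, Pi.single_apply]
      · rw [Pi.single_eq_of_ne huv]
        simp [List.mem_cons, Ne.symm huv]

/-- The canonical product over all vertices. -/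
noncomputable def Pg (a : Fin n → ℤ) : GraphGroup Γ := Pl (List.finRange n) a

lemma Pg_single (v : Fin n) (m : ℤ) : Pg (Γ := Γ) (Pi.single v m) = xg Γ v ^ m := by
  rw [Pg, Pl_single _ (List.nodup_finRange n), if_pos (List.mem_finRange v)]

lemma Pg_mul (a b : Fin n → ℤ) :
    ∃ t ∈ Cg Γ, Pg (Γ := Γ) a * Pg b = Pg (a + b) * t := Pl_mul _ a b

lemma Pg_zero : Pg (Γ := Γ) 0 = 1 := Pl_zero _

end Products
section QSection
variable {n : ℕ} {Γ : SimpleGraph (Fin n)}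

lemma Mdl.mul_b0 (s t : NonEdge Γ → ℤ) :
    (⟨0, s⟩ : Mdl Γ) * ⟨0, t⟩ = ⟨0, s + t⟩ := by
  refine Mdl.ext (funext fun i => ?_) (funext fun p => ?_) <;> simp

lemma Mdl.zpow_b0 (s : NonEdge Γ → ℤ) (m : ℤ) :
    (⟨0, s⟩ : Mdl Γ) ^ m = ⟨0, m • s⟩ := by
  have hinv : (⟨0, s⟩ : Mdl Γ)⁻¹ = ⟨0, -s⟩ := by
    refine Mdl.ext (funext fun i => ?_) (funext fun p => ?_) <;> simp
  induction m using Int.induction_on with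
  | zero => refine Mdl.ext (funext fun i => ?_) (funext fun p => ?_) <;> simp
  | succ m ih =>
      rw [zpow_add_one, ih, Mdl.mul_b0]
      refine Mdl.ext rfl (funext fun p => ?_)
      simp; ring
  | pred m ih =>
      rw [zpow_sub_one, ih, hinv, Mdl.mul_b0]
      refine Mdl.ext rfl (funext fun p => ?_)
      simp; ring

/-- List product of `y`-generator powers. -/
noncomputable def Ql (L : List (NonEdge Γ)) (t : NonEdge Γ → ℤ) : GraphGroup Γ :=
  (L.map fun p => yg Γ p ^ t p).prod

@[simp] lemma Ql_nil (t : NonEdge Γ → ℤ) : Ql (Γ := Γ) [] t = 1 := rfl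

lemma Ql_cons (q : NonEdge Γ) (L : List (NonEdge Γ)) (t : NonEdge Γ → ℤ) :
    Ql (Γ := Γ) (q :: L) t = yg Γ q ^ t q * Ql L t := by simp [Ql]

lemma yg_mem_Cg (p : NonEdge Γ) : yg Γ p ∈ Cg Γ :=
  Subgroup.subset_closure ⟨p, rfl⟩

lemma yg_zpow_mem (p : NonEdge Γ) (m : ℤ) : yg Γ p ^ m ∈ Cg Γ :=
  zpow_mem (yg_mem_Cg p) m

lemma Ql_mem (L : List (NonEdge Γ)) (t : NonEdge Γ → ℤ) : Ql (Γ := Γ) L t ∈ Cg Γ := by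
  induction L with
  | nil => exact one_mem _
  | cons q L ih => rw [Ql_cons]; exact mul_mem (yg_zpow_mem q _) ih

lemma phiG_Ql (L : List (NonEdge Γ)) (hnd : L.Nodup) (t : NonEdge Γ → ℤ) :
    phiG Γ (Ql (Γ := Γ) L t) = ⟨0, fun p => if p ∈ L then t p else 0⟩ := by
  induction L with
  | nil => refine Mdl.ext (funext fun i => ?_) (funext fun p => ?_) <;> simp
  | cons q L ih =>
      rw [Ql_cons, map_mul, map_zpow, phiG_yg, Mdl.zpow_b0, ih (List.nodup_cons.mp hnd).2,
        Mdl.mul_b0]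
      refine Mdl.ext (by simp) (funext fun p => ?_)
      have hq : q ∉ L := (List.nodup_cons.mp hnd).1
      simp only [Pi.add_apply, Pi.smul_apply, smul_eq_mul]
      rw [Pi.single_apply]
      by_cases hpq : p = q
      · subst hpq
        simp [hq]
      · simp [hpq, List.mem_cons]

lemma Ql_add (L : List (NonEdge Γ)) (s t : NonEdge Γ → ℤ) :
    Ql (Γ := Γ) L (s + t) = Ql L s * Ql L t := by
  induction L with
  | nil => simp
  | cons q L ih =>
      rw [Ql_cons, Ql_cons, Ql_cons, ih]
      have : (s + t) q = s q + t q := rfl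
      rw [this, zpow_add]
      calc yg Γ q ^ s q * yg Γ q ^ t q * (Ql L s * Ql L t)
          = yg Γ q ^ s q * (yg Γ q ^ t q * Ql L s) * Ql L t := by group
      _ = yg Γ q ^ s q * (Ql L s * yg Γ q ^ t q) * Ql L t := by
            rw [central_comm (yg_zpow_mem q (t q)) (Ql L s)]
      _ = yg Γ q ^ s q * Ql L s * (yg Γ q ^ t q * Ql L t) := by group

lemma Ql_single (L : List (NonEdge Γ)) (hnd : L.Nodup) (p : NonEdge Γ) (m : ℤ) :
    Ql (Γ := Γ) L (Pi.single p m) = if p ∈ L then yg Γ p ^ m else 1 := by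
  induction L with
  | nil => simp
  | cons q L ih =>
      rw [Ql_cons, ih (List.nodup_cons.mp hnd).2]
      by_cases hqp : q = p
      · subst hqp
        have : q ∉ L := (List.nodup_cons.mp hnd).1
        simp [this, Pi.single_apply]
      · rw [Pi.single_eq_of_ne hqp]
        simp [List.mem_cons, Ne.symm hqp]

/-- The canonical product of `y`-generator powers over all non-edges. -/
noncomputable def Qg (t : NonEdge Γ → ℤ) : GraphGroup Γ :=
  Ql (Finset.univ.toList (α := NonEdge Γ)) t

lemma Qg_mem (t : NonEdge Γ → ℤ) : Qg (Γ := Γ) t ∈ Cg Γ := Ql_mem _ _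

lemma phiG_Qg (t : NonEdge Γ → ℤ) : phiG Γ (Qg (Γ := Γ) t) = ⟨0, t⟩ := by
  rw [Qg, phiG_Ql _ (Finset.nodup_toList _)]
  refine Mdl.ext rfl (funext fun p => ?_)
  simp [Finset.mem_toList]

lemma Qg_add (s t : NonEdge Γ → ℤ) : Qg (Γ := Γ) (s + t) = Qg s * Qg t := Ql_add _ s t

lemma Ql_zero (L : List (NonEdge Γ)) : Ql (Γ := Γ) L 0 = 1 := by
  induction L with
  | nil => rfl
  | cons q L ih => rw [Ql_cons, ih]; simp

lemma Qg_zero : Qg (Γ := Γ) 0 = 1 := Ql_zero _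

lemma Qg_single (p : NonEdge Γ) (m : ℤ) : Qg (Γ := Γ) (Pi.single p m) = yg Γ p ^ m := by
  rw [Qg, Ql_single _ (Finset.nodup_toList _), if_pos (by simp [Finset.mem_toList])]

lemma Qg_inj {s t : NonEdge Γ → ℤ} (h : Qg (Γ := Γ) s = Qg t) : s = t := by
  have := congrArg (fun u => (phiG Γ u).b) h
  simpa [phiG_Qg] using this

lemma Cg_eq_Qg {u : GraphGroup Γ} (hu : u ∈ Cg Γ) : ∃ t, u = Qg (Γ := Γ) t := by
  induction hu using Subgroup.closure_induction with
  | mem s hs =>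
      obtain ⟨p, rfl⟩ := hs
      exact ⟨Pi.single p 1, by rw [Qg_single, zpow_one]⟩
  | one => exact ⟨0, Qg_zero.symm⟩
  | mul a b _ _ ha hb =>
      obtain ⟨ta, rfl⟩ := ha
      obtain ⟨tb, rfl⟩ := hb
      exact ⟨ta + tb, (Qg_add ta tb).symm⟩
  | inv a _ ha =>
      obtain ⟨ta, rfl⟩ := ha
      refine ⟨-ta, ?_⟩
      rw [eq_comm, eq_inv_iff_mul_eq_one, ← Qg_add]
      simp [Qg_zero]

end QSection
section NormalForm
variable {n : ℕ} {Γ : SimpleGraph (Fin n)}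

lemma phiG_Pl_a (L : List (Fin n)) (hnd : L.Nodup) (a : Fin n → ℤ) :
    (phiG Γ (Pl (Γ := Γ) L a)).a = fun v => if v ∈ L then a v else 0 := by
  induction L with
  | nil => funext v; simp [Pl]
  | cons u L ih =>
      rw [Pl_cons, map_mul, Mdl.mul_a, map_zpow, phiG_xg, Mdl.zpow_a,
        ih (List.nodup_cons.mp hnd).2]
      funext v
      have hu : u ∉ L := (List.nodup_cons.mp hnd).1
      simp only [Pi.add_apply, Pi.smul_apply, smul_eq_mul]
      rw [Pi.single_apply]
      by_cases hvu : v = u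
      · subst hvu; simp [hu]
      · simp [hvu, List.mem_cons]

lemma phiG_Pg_a (a : Fin n → ℤ) : (phiG Γ (Pg (Γ := Γ) a)).a = a := by
  rw [Pg, phiG_Pl_a _ (List.nodup_finRange n)]
  funext v
  simp [List.mem_finRange]

lemma phiG_Cg_a {u : GraphGroup Γ} (hu : u ∈ Cg Γ) : (phiG Γ u).a = 0 := by
  obtain ⟨t, rfl⟩ := Cg_eq_Qg hu
  rw [phiG_Qg]

lemma exists_rep (u : GraphGroup Γ) :
    ∃ a cg, cg ∈ Cg Γ ∧ u = Pg (Γ := Γ) a * cg := by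
  have hu : u ∈ Subgroup.closure (Set.range (PresentedGroup.of :
      GraphGens Γ → GraphGroup Γ)) := by
    rw [PresentedGroup.closure_range_of]; trivial
  induction hu using Subgroup.closure_induction with
  | mem s hs =>
      obtain ⟨g0, rfl⟩ := hs
      cases g0 with
      | inl v =>
          exact ⟨Pi.single v 1, 1, one_mem _, by
            rw [Pg_single, zpow_one, mul_one]; rfl⟩
      | inr p =>
          exact ⟨0, yg Γ p, yg_mem_Cg p, by rw [Pg_zero, one_mul]; rfl⟩
  | one => exact ⟨0, 1, one_mem _, by rw [Pg_zero, one_mul]⟩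
  | mul u v _ _ hu hv =>
      obtain ⟨a, cg, hcg, rfl⟩ := hu
      obtain ⟨b, cg', hcg', rfl⟩ := hv
      obtain ⟨t, ht, hP⟩ := Pg_mul (Γ := Γ) a b
      refine ⟨a + b, t * (cg * cg'), mul_mem ht (mul_mem hcg hcg'), ?_⟩
      calc Pg (Γ := Γ) a * cg * (Pg b * cg')
          = Pg a * (cg * Pg b) * cg' := by group
      _ = Pg a * (Pg b * cg) * cg' := by rw [central_comm hcg]
      _ = (Pg a * Pg b) * (cg * cg') := by group
      _ = Pg (a + b) * (t * (cg * cg')) := by rw [hP]; group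
  | inv u _ hu =>
      obtain ⟨a, cg, hcg, rfl⟩ := hu
      obtain ⟨t, ht, hP⟩ := Pg_mul (Γ := Γ) a (-a)
      have h0 : Pg (Γ := Γ) a * Pg (-a) = t := by
        rw [hP, add_neg_cancel, Pg_zero, one_mul]
      have hinv : (Pg (Γ := Γ) a)⁻¹ = Pg (-a) * t⁻¹ :=
        inv_eq_of_mul_eq_one_right (by rw [← mul_assoc, h0, mul_inv_cancel])
      refine ⟨-a, cg⁻¹ * t⁻¹, mul_mem (inv_mem hcg) (inv_mem ht), ?_⟩
      calc (Pg (Γ := Γ) a * cg)⁻¹ = cg⁻¹ * (Pg a)⁻¹ := by group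
      _ = cg⁻¹ * Pg (-a) * t⁻¹ := by rw [hinv]; group
      _ = Pg (-a) * cg⁻¹ * t⁻¹ := by rw [central_comm (inv_mem hcg) (Pg (-a))]
      _ = Pg (-a) * (cg⁻¹ * t⁻¹) := by group

lemma comm_mem_Cg (g1 g2 : GraphGroup Γ) : ⁅g1, g2⁆ ∈ Cg Γ := by
  obtain ⟨s1, d1, hd1, h1⟩ := exists_rep (g1 * g2)
  obtain ⟨s2, d2, hd2, h2⟩ := exists_rep (g2 * g1)
  have hs : s1 = s2 := by
    have e1 : (phiG Γ (g1 * g2)).a = s1 := by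
      rw [h1, map_mul, Mdl.mul_a, phiG_Pg_a, phiG_Cg_a hd1, add_zero]
    have e2 : (phiG Γ (g2 * g1)).a = s2 := by
      rw [h2, map_mul, Mdl.mul_a, phiG_Pg_a, phiG_Cg_a hd2, add_zero]
    have e3 : (phiG Γ (g1 * g2)).a = (phiG Γ (g2 * g1)).a := by
      rw [map_mul, map_mul, Mdl.mul_a, Mdl.mul_a, add_comm]
    rw [e1, e2] at e3
    exact e3
  have hcomm : ⁅g1, g2⁆ = (g1 * g2) * (g2 * g1)⁻¹ := by
    rw [commutatorElement_def]; group
  rw [hcomm, h1, h2, hs]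
  have : Pg (Γ := Γ) s2 * d1 * (Pg s2 * d2)⁻¹ = d1 * d2⁻¹ := by
    calc Pg (Γ := Γ) s2 * d1 * (Pg s2 * d2)⁻¹
        = Pg s2 * (d1 * d2⁻¹) * (Pg s2)⁻¹ := by group
    _ = (d1 * d2⁻¹) * Pg s2 * (Pg s2)⁻¹ := by
        rw [central_comm (mul_mem hd1 (inv_mem hd2)) (Pg s2)]
    _ = d1 * d2⁻¹ := by group
  rw [this]
  exact mul_mem hd1 (inv_mem hd2)

lemma commutator_eq_Cg : commutator (GraphGroup Γ) = Cg Γ := by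
  apply le_antisymm
  · rw [commutator_def, Subgroup.commutator_le]
    intro g1 _ g2 _
    exact comm_mem_Cg g1 g2
  · rw [Cg, Subgroup.closure_le]
    rintro s ⟨p, rfl⟩
    rw [commutator_def, ← nonedge_comm p]
    exact Subgroup.commutator_mem_commutator (Subgroup.mem_top _) (Subgroup.mem_top _)

lemma Pg_zpow (b : Fin n → ℤ) (m : ℤ) :
    ∃ t ∈ Cg Γ, Pg (Γ := Γ) b ^ m = Pg (m • b) * t := by
  induction m using Int.induction_on with
  | zero => exact ⟨1, one_mem _, by rw [zpow_zero, zero_smul, Pg_zero, one_mul]⟩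
  | succ m ih =>
      obtain ⟨t, ht, hP⟩ := ih
      obtain ⟨t2, ht2, hP2⟩ := Pg_mul (Γ := Γ) ((m : ℤ) • b) b
      refine ⟨t2 * t, mul_mem ht2 ht, ?_⟩
      have hsm : ((m : ℤ) + 1) • b = (m : ℤ) • b + b := by rw [add_smul, one_smul]
      calc Pg (Γ := Γ) b ^ ((m : ℤ) + 1) = Pg b ^ (m : ℤ) * Pg b := by rw [zpow_add_one]
      _ = Pg ((m : ℤ) • b) * (t * Pg b) := by rw [hP]; group
      _ = Pg ((m : ℤ) • b) * (Pg b * t) := by rw [central_comm ht (Pg b)]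
      _ = (Pg ((m : ℤ) • b) * Pg b) * t := by group
      _ = Pg (((m : ℤ) + 1) • b) * (t2 * t) := by rw [hP2, hsm]; group
  | pred m ih =>
      obtain ⟨t, ht, hP⟩ := ih
      obtain ⟨t2, ht2, hP2⟩ := Pg_mul (Γ := Γ) (-(m : ℤ) • b) (-b)
      obtain ⟨t3, ht3, hP3⟩ := Pg_mul (Γ := Γ) b (-b)
      have h0 : Pg (Γ := Γ) b * Pg (-b) = t3 := by
        rw [hP3, add_neg_cancel, Pg_zero, one_mul]
      have hinv : (Pg (Γ := Γ) b)⁻¹ = Pg (-b) * t3⁻¹ :=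
        inv_eq_of_mul_eq_one_right (by rw [← mul_assoc, h0, mul_inv_cancel])
      refine ⟨t2 * (t * t3⁻¹), mul_mem ht2 (mul_mem ht (inv_mem ht3)), ?_⟩
      have hsm : (-(m : ℤ) - 1) • b = -(m : ℤ) • b + -b := by
        rw [sub_smul, one_smul, neg_smul]
        abel
      calc Pg (Γ := Γ) b ^ (-(m : ℤ) - 1) = Pg b ^ (-(m : ℤ)) * (Pg b)⁻¹ := by
            rw [zpow_sub_one]
      _ = Pg (-(m : ℤ) • b) * t * (Pg (-b) * t3⁻¹) := by rw [hP, hinv]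
      _ = Pg (-(m : ℤ) • b) * (t * Pg (-b)) * t3⁻¹ := by group
      _ = Pg (-(m : ℤ) • b) * (Pg (-b) * t) * t3⁻¹ := by rw [central_comm ht (Pg (-b))]
      _ = (Pg (-(m : ℤ) • b) * Pg (-b)) * (t * t3⁻¹) := by group
      _ = Pg ((-(m : ℤ) - 1) • b) * (t2 * (t * t3⁻¹)) := by rw [hP2, hsm]; group

end NormalForm
section Arith
variable {n k : ℕ} {Γ : SimpleGraph (Fin n)}

lemma arith_prop (c : Fin n → Fin k) (hdisj : ∀ a b, Γ.Adj a b → c a = c b)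
    (z a : Fin n → ℤ) (v₁ v₂ : Fin n) (hne : c v₁ ≠ c v₂) (hz₂ : z v₂ ≠ 0)
    (ha : ∀ p : NonEdge Γ, a p.1.2 * z p.1.1 = z p.1.2 * a p.1.1) :
    ∀ i, z v₁ * a i = a v₁ * z i := by
  have hcross : ∀ u v, c u ≠ c v → a u * z v = z u * a v := by
    intro u v huv
    rcases lt_trichotomy u v with h | h | h
    · have hadj : ¬ Γ.Adj u v := fun hA => huv (hdisj _ _ hA)
      have h1 := ha ⟨(u, v), h, hadj⟩
      linear_combination -h1
    · exact absurd (congrArg c h) huv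
    · have hadj : ¬ Γ.Adj v u := fun hA => huv (hdisj _ _ hA).symm
      exact ha ⟨(v, u), h, hadj⟩
  intro i
  by_cases hc : c i = c v₁
  · have hne2 : c i ≠ c v₂ := by rw [hc]; exact hne
    have h1 : a i * z v₂ = z i * a v₂ := hcross i v₂ hne2
    have h2 : a v₁ * z v₂ = z v₁ * a v₂ := hcross v₁ v₂ hne
    have h3 : (z v₁ * a i) * z v₂ = (a v₁ * z i) * z v₂ := by
      linear_combination z v₁ * h1 - z i * h2
    exact mul_right_cancel₀ hz₂ h3
  · have h1 := hcross i v₁ hc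
    linear_combination h1

lemma arith_main (c : Fin n → Fin k) (hdisj : ∀ a b, Γ.Adj a b → c a = c b)
    (z a : Fin n → ℤ) (v₁ v₂ : Fin n) (hne : c v₁ ≠ c v₂)
    (hz₁ : z v₁ ≠ 0) (hz₂ : z v₂ ≠ 0) (d : ℤ) (hd : d = Finset.univ.gcd z)
    (ha : ∀ p : NonEdge Γ, a p.1.2 * z p.1.1 = z p.1.2 * a p.1.1) :
    ∃ m : ℤ, a = fun i => m * (z i / d) := by
  have hprop := arith_prop c hdisj z a v₁ v₂ hne hz₂ ha
  have hdvd : ∀ i, d ∣ z i := fun i => hd ▸ Finset.gcd_dvd (Finset.mem_univ i)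
  have hzd : z v₁ ∣ a v₁ * d := by
    have h1 : z v₁ ∣ Finset.univ.gcd (fun i => a v₁ * z i) :=
      Finset.dvd_gcd fun i _ => ⟨a i, (hprop i).symm⟩
    have h2 : Finset.univ.gcd (fun i => a v₁ * z i) = normalize (a v₁) * Finset.univ.gcd z :=
      Finset.gcd_mul_left
    rw [h2, ← hd] at h1
    exact h1.trans (mul_dvd_mul_right (normalize_dvd_iff.mpr dvd_rfl) d)
  refine ⟨a v₁ * d / z v₁, funext fun i => ?_⟩
  have e1 : z v₁ * (a v₁ * d / z v₁ * (z i / d)) = z v₁ * a i := by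
    calc z v₁ * (a v₁ * d / z v₁ * (z i / d))
        = z v₁ * (a v₁ * d / z v₁) * (z i / d) := by ring
    _ = (a v₁ * d) * (z i / d) := by rw [Int.mul_ediv_cancel' hzd]
    _ = a v₁ * (d * (z i / d)) := by ring
    _ = a v₁ * z i := by rw [Int.mul_ediv_cancel' (hdvd i)]
    _ = z v₁ * a i := (hprop i).symm
  exact (mul_left_cancel₀ hz₁ e1).symm

end Arith

/-- Let `Γ` be the disjoint union of its parts along the component map `c` (no edges
between different parts).  For `x = ∏_v x_v^{z_v} · w` (with `w` a product of powers of the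
`y_l`) having nonzero exponents in two different components, and `d` the gcd of the
exponents, the centralizer of `x` is the internal direct product of the infinite cyclic
subgroup generated by `g = ∏_v x_v^{z_v/d}` with `γ₂(G_Γ)`, and it is free abelian of rank
`N + 1`. -/
theorem centralizer_in_disjoint_union_graphGroup
    {n : ℕ} (Γ : SimpleGraph (Fin n))
    (k : ℕ) (c : Fin n → Fin k) (hdisj : ∀ a b, Γ.Adj a b → c a = c b)
    (z : Fin n → ℤ) (w : GraphGroup Γ) (hw : w ∈ Subgroup.closure (Set.range (yg Γ)))
    (v₁ v₂ : Fin n) (hne : c v₁ ≠ c v₂) (hz₁ : z v₁ ≠ 0) (hz₂ : z v₂ ≠ 0)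
    (x : GraphGroup Γ)
    (hx : x = ((List.finRange n).map fun v => xg Γ v ^ z v).prod * w)
    (d : ℤ) (hd : d = Finset.univ.gcd z)
    (g : GraphGroup Γ)
    (hg : g = ((List.finRange n).map fun v => xg Γ v ^ (z v / d)).prod) :
    Function.Injective
      (fun q : ℤ × commutator (GraphGroup Γ) => g ^ q.1 * (q.2 : GraphGroup Γ)) ∧
    Set.range (fun q : ℤ × commutator (GraphGroup Γ) => g ^ q.1 * (q.2 : GraphGroup Γ)) =
      (Subgroup.centralizer {x} : Set (GraphGroup Γ)) ∧
    Nonempty (Multiplicative (Option (NonEdge Γ) →₀ ℤ) ≃* Subgroup.centralizer {x}) := by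
  classical
  have hwC : w ∈ Cg Γ := hw
  have hdvd : ∀ i, d ∣ z i := fun i => hd ▸ Finset.gcd_dvd (Finset.mem_univ i)
  have hd0 : d ≠ 0 := by
    intro h0
    rw [h0] at hd
    exact hz₁ (Finset.gcd_eq_zero_iff.mp hd.symm v₁ (Finset.mem_univ v₁))
  set z' : Fin n → ℤ := fun v => z v / d with hz'def
  have hz'v₁ : z' v₁ ≠ 0 := by
    intro h0
    apply hz₁
    have h1 := Int.mul_ediv_cancel' (hdvd v₁)
    rw [← h1, show z v₁ / d = z' v₁ from rfl, h0, mul_zero]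
  have hgPg : g = Pg (Γ := Γ) z' := hg
  have hxPg : x = Pg (Γ := Γ) z * w := hx
  have hzz' : ∀ i j : Fin n, z' j * z i = z j * z' i := by
    intro i j
    obtain ⟨ci, hci⟩ := hdvd i
    obtain ⟨cj, hcj⟩ := hdvd j
    have e1 : z' i = ci := by
      show z i / d = ci
      rw [hci, Int.mul_ediv_cancel_left ci hd0]
    have e2 : z' j = cj := by
      show z j / d = cj
      rw [hcj, Int.mul_ediv_cancel_left cj hd0]
    rw [e1, e2, hci, hcj]; ring
  have hφx_a : (phiG Γ x).a = z := by
    rw [hxPg, map_mul, Mdl.mul_a, phiG_Pg_a, phiG_Cg_a hwC, add_zero]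
  have hφg_a : (phiG Γ g).a = z' := by rw [hgPg, phiG_Pg_a]
  -- `g` commutes with `x`
  have hgx : Commute g x := by
    have hPP : Commute (Pg (Γ := Γ) z') (Pg z) := by
      obtain ⟨s, hsQ⟩ := Cg_eq_Qg (comm_mem_Cg (Pg (Γ := Γ) z') (Pg z))
      have h1 : phiG Γ ⁅Pg (Γ := Γ) z', Pg z⁆ = ⟨0, 0⟩ := by
        rw [map_commutatorElement, Mdl.commutator_eq]
        refine Mdl.ext rfl (funext fun p => ?_)
        rw [phiG_Pg_a, phiG_Pg_a]
        show z' p.1.2 * z p.1.1 - z p.1.2 * z' p.1.1 = 0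
        rw [hzz' p.1.1 p.1.2, sub_self]
      rw [hsQ, phiG_Qg] at h1
      have hs0 : s = 0 := congrArg Mdl.b h1
      apply commutatorElement_eq_one_iff_commute.mp
      rw [hsQ, hs0, Qg_zero]
    rw [hgPg, hxPg]
    exact hPP.mul_right (Cg_mem_commute hwC (Pg (Γ := Γ) z')).symm
  -- elements `g ^ m * Qg t` centralize `x`
  have hmemC : ∀ (m : ℤ) (t : NonEdge Γ → ℤ),
      g ^ m * Qg t ∈ Subgroup.centralizer ({x} : Set (GraphGroup Γ)) := by
    intro m t
    have hcomm : Commute (g ^ m * Qg (Γ := Γ) t) x :=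
      Commute.mul_left (hgx.zpow_left m) (Cg_mem_commute (Qg_mem t) x)
    exact Subgroup.mem_centralizer_iff.mpr fun y hy => by
      rw [Set.mem_singleton_iff] at hy; subst hy; exact hcomm.symm.eq
  have hCommEq := commutator_eq_Cg (Γ := Γ)
  -- every centralizer element has the form `g ^ m * Qg t`
  have hrep : ∀ u, u ∈ Subgroup.centralizer ({x} : Set (GraphGroup Γ)) →
      ∃ (m : ℤ) (t : NonEdge Γ → ℤ), u = g ^ m * Qg t := by
    intro u hu
    obtain ⟨a, cgel, hcg, rfl⟩ := exists_rep (Γ := Γ) u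
    have hxu : Commute (Pg (Γ := Γ) a * cgel) x :=
      (show Commute x (Pg (Γ := Γ) a * cgel) from
        Subgroup.mem_centralizer_iff.mp hu x (Set.mem_singleton x)).symm
    have hc1 : phiG Γ ⁅Pg (Γ := Γ) a * cgel, x⁆ = 1 := by
      rw [commutatorElement_eq_one_iff_commute.mpr hxu, map_one]
    have hua : (phiG Γ (Pg (Γ := Γ) a * cgel)).a = a := by
      rw [map_mul, Mdl.mul_a, phiG_Pg_a, phiG_Cg_a hcg, add_zero]
    have ha : ∀ p : NonEdge Γ, a p.1.2 * z p.1.1 = z p.1.2 * a p.1.1 := by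
      intro p
      rw [map_commutatorElement, Mdl.commutator_eq, hua, hφx_a] at hc1
      have h2 := congrFun (congrArg Mdl.b hc1) p
      simp only [Mdl.one_b, Pi.zero_apply] at h2
      linarith [h2]
    obtain ⟨m, ham⟩ := arith_main c hdisj z a v₁ v₂ hne hz₁ hz₂ d hd ha
    have ham' : a = m • z' := by
      rw [ham]; funext i; simp [hz'def]
    obtain ⟨t, ht, hPz⟩ := Pg_zpow (Γ := Γ) z' m
    obtain ⟨s, hsQ⟩ := Cg_eq_Qg (mul_mem (inv_mem ht) hcg)
    refine ⟨m, s, ?_⟩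
    calc Pg (Γ := Γ) a * cgel = Pg (m • z') * cgel := by rw [ham']
    _ = (Pg (Γ := Γ) z' ^ m * t⁻¹) * cgel := by
        rw [hPz]; group
    _ = g ^ m * (t⁻¹ * cgel) := by rw [hgPg]; group
    _ = g ^ m * Qg s := by rw [hsQ]
  -- exponents are determined
  have hexp : ∀ (m m' : ℤ) (c1 c2 : GraphGroup Γ), c1 ∈ Cg Γ → c2 ∈ Cg Γ →
      g ^ m * c1 = g ^ m' * c2 → m = m' := by
    intro m m' c1 c2 hc1 hc2 heq
    have e : ∀ (mm : ℤ) (cc : GraphGroup Γ), cc ∈ Cg Γ →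
        (phiG Γ (g ^ mm * cc)).a = mm • z' := by
      intro mm cc hcc
      rw [map_mul, Mdl.mul_a, map_zpow, Mdl.zpow_a, hφg_a, phiG_Cg_a hcc, add_zero]
    have h1 : m • z' = m' • z' := by
      rw [← e m c1 hc1, ← e m' c2 hc2, heq]
    have h2 : m * z' v₁ = m' * z' v₁ := by
      have h3 := congrFun h1 v₁
      simpa using h3
    exact mul_right_cancel₀ hz'v₁ h2
  refine ⟨?_, ?_, ?_⟩
  · -- injectivity
    intro q q' heq
    simp only at heq
    have hm : q.1 = q'.1 :=
      hexp _ _ _ _ (hCommEq ▸ q.2.2) (hCommEq ▸ q'.2.2) heq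
    have hc : (q.2 : GraphGroup Γ) = q'.2 := by
      rw [hm] at heq
      exact mul_left_cancel heq
    exact Prod.ext hm (Subtype.ext hc)
  · -- range equals centralizer
    refine Set.Subset.antisymm ?_ ?_
    · rintro _ ⟨⟨m, cel⟩, rfl⟩
      obtain ⟨t, htQ⟩ := Cg_eq_Qg
        (show (cel : GraphGroup Γ) ∈ Cg Γ by rw [← hCommEq]; exact cel.2)
      simp only
      rw [htQ]
      exact hmemC m t
    · intro u hu
      obtain ⟨m, t, rfl⟩ := hrep u hu
      refine ⟨(m, ⟨Qg t, ?_⟩), rfl⟩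
      rw [hCommEq]
      exact Qg_mem t
  · -- the centralizer is free abelian of rank `N + 1`
    let f : Multiplicative (ℤ × (NonEdge Γ → ℤ)) →
        Subgroup.centralizer ({x} : Set (GraphGroup Γ)) :=
      fun q => ⟨g ^ (Multiplicative.toAdd q).1 * Qg (Multiplicative.toAdd q).2, hmemC _ _⟩
    have hf : ∀ q r, f (q * r) = f q * f r := by
      intro q r
      apply Subtype.ext
      show g ^ ((Multiplicative.toAdd q).1 + (Multiplicative.toAdd r).1) *
          Qg ((Multiplicative.toAdd q).2 + (Multiplicative.toAdd r).2) =
        (g ^ (Multiplicative.toAdd q).1 * Qg (Multiplicative.toAdd q).2) *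
          (g ^ (Multiplicative.toAdd r).1 * Qg (Multiplicative.toAdd r).2)
      rw [zpow_add, Qg_add]
      calc g ^ (Multiplicative.toAdd q).1 * g ^ (Multiplicative.toAdd r).1 *
            (Qg (Multiplicative.toAdd q).2 * Qg (Multiplicative.toAdd r).2)
          = g ^ (Multiplicative.toAdd q).1 *
              (g ^ (Multiplicative.toAdd r).1 * Qg (Multiplicative.toAdd q).2) *
              Qg (Multiplicative.toAdd r).2 := by group
      _ = g ^ (Multiplicative.toAdd q).1 *
              (Qg (Multiplicative.toAdd q).2 * g ^ (Multiplicative.toAdd r).1) *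
              Qg (Multiplicative.toAdd r).2 := by
            rw [central_comm (Qg_mem _) (g ^ (Multiplicative.toAdd r).1)]
      _ = (g ^ (Multiplicative.toAdd q).1 * Qg (Multiplicative.toAdd q).2) *
            (g ^ (Multiplicative.toAdd r).1 * Qg (Multiplicative.toAdd r).2) := by group
    let F := MonoidHom.mk' f hf
    have hFinj : Function.Injective F := by
      intro q r heq
      have heq' : g ^ (Multiplicative.toAdd q).1 * Qg (Multiplicative.toAdd q).2 =
          g ^ (Multiplicative.toAdd r).1 * Qg (Multiplicative.toAdd r).2 :=
        congrArg Subtype.val heq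
      have hm := hexp _ _ _ _ (Qg_mem _) (Qg_mem _) heq'
      have ht : Qg (Γ := Γ) (Multiplicative.toAdd q).2 = Qg (Multiplicative.toAdd r).2 := by
        rw [hm] at heq'
        exact mul_left_cancel heq'
      exact Multiplicative.toAdd.injective (Prod.ext hm (Qg_inj ht))
    have hFsurj : Function.Surjective F := by
      rintro ⟨u, hu⟩
      obtain ⟨m, t, rfl⟩ := hrep u hu
      exact ⟨Multiplicative.ofAdd (m, t), rfl⟩
    let A : (Option (NonEdge Γ) →₀ ℤ) ≃+ (ℤ × (NonEdge Γ → ℤ)) :=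
      { toFun := fun f0 => (f0 none, fun p => f0 (some p))
        invFun := fun q => Finsupp.equivFunOnFinite.symm (fun o => o.elim q.1 q.2)
        left_inv := by
          intro f0
          ext o
          cases o <;> simp
        right_inv := by
          intro q
          refine Prod.ext ?_ (funext fun p => ?_) <;> simp
        map_add' := by
          intro f1 f2
          refine Prod.ext ?_ (funext fun p => ?_) <;> simp }
    exact ⟨(AddEquiv.toMultiplicative A).trans (MulEquiv.ofBijective F ⟨hFinj, hFsurj⟩)⟩
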